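/- arXiv:1603.07560 — 2 statements merged into one kernel-verified Lean document; each statement's English description precedes it below -/
import Mathlib

section
/- For the one-dimensional physicists' Hermite polynomials H_n and ν > 0, the Segal–Bargmann transform satisfies: (ν/π)^{3/4} ∫_ℝ exp(−(ν/2)z² + √2 ν x z) H_n(√ν x) exp(−ν x²) dx = (ν/π)^{1/4} (2ν)^{n/2} z^n for every z ∈ ℂ. -/
open MeasureTheory Real Complex Polynomial Filter

/-- The physicists' Hermite polynomial `H_n(ξ) = (−1)^n e^{ξ²} (d/dξ)^n e^{−ξ²}`. -/
noncomputable def hermiteP (n : ℕ) (x : ℝ) : ℝ :=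
  (-1 : ℝ) ^ n * Real.exp (x ^ 2) * iteratedDeriv n (fun t : ℝ => Real.exp (-t ^ 2)) x

lemma aux_pow_abs_le (k : ℕ) (t : ℝ) : |t| ^ k ≤ (k.factorial : ℝ) * Real.exp |t| := by
  have h := Real.pow_div_factorial_le_exp |t| (abs_nonneg t) k
  have hk : (0 : ℝ) < k.factorial := by positivity
  calc |t| ^ k = (|t| ^ k / k.factorial) * k.factorial := by field_simp
    _ ≤ Real.exp |t| * k.factorial := mul_le_mul_of_nonneg_right h hk.le
    _ = _ := mul_comm _ _

lemma integ_pow (k : ℕ) (d : ℝ) :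
    Integrable (fun t : ℝ => t ^ k * Real.exp (-t ^ 2 + d * t)) := by
  have hC : Integrable (fun t : ℝ =>
      ((k.factorial : ℝ) * Real.exp ((1 + |d|) ^ 2 / 2)) * Real.exp (-(1/2 : ℝ) * t ^ 2)) :=
    (integrable_exp_neg_mul_sq (by norm_num)).const_mul _
  refine hC.mono' (Continuous.aestronglyMeasurable (by continuity)) (Filter.Eventually.of_forall fun t => ?_)
  have h1 : ‖t ^ k * Real.exp (-t ^ 2 + d * t)‖ = |t| ^ k * Real.exp (-t ^ 2 + d * t) := by
    rw [norm_mul, norm_pow, Real.norm_eq_abs, Real.norm_eq_abs,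
      abs_of_pos (Real.exp_pos _)]
  rw [h1]
  calc |t| ^ k * Real.exp (-t ^ 2 + d * t)
      ≤ ((k.factorial : ℝ) * Real.exp |t|) * Real.exp (-t ^ 2 + d * t) :=
        mul_le_mul_of_nonneg_right (aux_pow_abs_le k t) (Real.exp_pos _).le
    _ = (k.factorial : ℝ) * Real.exp (|t| + (-t ^ 2 + d * t)) := by
        rw [mul_assoc, ← Real.exp_add]
    _ ≤ (k.factorial : ℝ) * Real.exp ((1 + |d|) ^ 2 / 2 + -(1/2 : ℝ) * t ^ 2) := by
        have hdt : d * t ≤ |d| * |t| := by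
          calc d * t ≤ |d * t| := le_abs_self _
            _ = |d| * |t| := abs_mul d t
        have ht2 : |t| ^ 2 = t ^ 2 := sq_abs t
        have hineq : |t| + (-t ^ 2 + d * t) ≤ (1 + |d|) ^ 2 / 2 + -(1/2 : ℝ) * t ^ 2 := by
          nlinarith [sq_nonneg (|t| - (1 + |d|)), abs_nonneg t, abs_nonneg d]
        exact mul_le_mul_of_nonneg_left (Real.exp_le_exp.mpr hineq) (by positivity)
    _ = ((k.factorial : ℝ) * Real.exp ((1 + |d|) ^ 2 / 2)) * Real.exp (-(1/2 : ℝ) * t ^ 2) := by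
        rw [Real.exp_add]; ring

lemma integ_poly (p : Polynomial ℝ) (d : ℝ) :
    Integrable (fun t : ℝ => p.eval t * Real.exp (-t ^ 2 + d * t)) := by
  induction p using Polynomial.induction_on' with
  | add p q hp hq => simpa [add_mul] using hp.fun_add hq
  | monomial m a => simpa [Polynomial.eval_monomial, mul_assoc] using (integ_pow m d).const_mul a

lemma integ_cx (p : Polynomial ℝ) (w c : ℂ) :
    Integrable (fun t : ℝ =>
      Complex.exp (w * t + c) * ((p.eval t * Real.exp (-t ^ 2) : ℝ) : ℂ)) := by
  have hm : AEStronglyMeasurable (fun t : ℝ =>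
      Complex.exp (w * t + c) * ((p.eval t * Real.exp (-t ^ 2) : ℝ) : ℂ)) volume := by
    apply Continuous.aestronglyMeasurable
    fun_prop
  rw [← integrable_norm_iff hm]
  have h1 : Integrable (fun t : ℝ =>
      Real.exp c.re * |p.eval t * Real.exp (-t ^ 2 + w.re * t)|) :=
    ((integ_poly p w.re).abs.const_mul _)
  have heq : (fun t : ℝ =>
      ‖Complex.exp (w * t + c) * ((p.eval t * Real.exp (-t ^ 2) : ℝ) : ℂ)‖)
      = fun t : ℝ => Real.exp c.re * |p.eval t * Real.exp (-t ^ 2 + w.re * t)| := by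
    funext t
    rw [norm_mul, Complex.norm_exp, Complex.norm_real, Real.norm_eq_abs]
    have hre : (w * (t : ℂ) + c).re = w.re * t + c.re := by simp
    rw [hre, abs_mul, abs_mul, abs_of_pos (Real.exp_pos _), abs_of_pos (Real.exp_pos _),
      Real.exp_add, Real.exp_add]
    ring
  rw [heq]
  exact h1

lemma hasDerivAt_poly_gauss (p : Polynomial ℝ) (s : ℝ) :
    HasDerivAt (fun t : ℝ => p.eval t * Real.exp (-t ^ 2))
      ((p.derivative.eval s - 2 * s * p.eval s) * Real.exp (-s ^ 2)) s := by
  have h1 : HasDerivAt (fun t : ℝ => p.eval t) (p.derivative.eval s) s := p.hasDerivAt s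
  have h0 : HasDerivAt (fun t : ℝ => -t ^ 2) (-(2 * s)) s := by
    simpa using (hasDerivAt_pow 2 s).fun_neg
  have h2 : HasDerivAt (fun t : ℝ => Real.exp (-t ^ 2)) (-(2 * s) * Real.exp (-s ^ 2)) s := by
    have := h0.exp
    convert this using 1
    ring
  have := h1.mul h2
  refine this.congr_deriv ?_
  ring

lemma iter_gauss (n : ℕ) : ∃ p : Polynomial ℝ, ∀ t : ℝ,
    iteratedDeriv n (fun s : ℝ => Real.exp (-s ^ 2)) t = p.eval t * Real.exp (-t ^ 2) := by
  induction n with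
  | zero => exact ⟨1, fun t => by simp [iteratedDeriv_zero]⟩
  | succ n ih =>
    obtain ⟨p, hp⟩ := ih
    refine ⟨p.derivative - Polynomial.C 2 * Polynomial.X * p, fun t => ?_⟩
    have heq : iteratedDeriv n (fun s : ℝ => Real.exp (-s ^ 2))
        = fun t : ℝ => p.eval t * Real.exp (-t ^ 2) := funext hp
    rw [iteratedDeriv_succ, heq, (hasDerivAt_poly_gauss p t).deriv]
    simp only [Polynomial.eval_sub, Polynomial.eval_mul, Polynomial.eval_C, Polynomial.eval_X]
    try ring

lemma hasDerivAt_iter (n : ℕ) (t : ℝ) :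
    HasDerivAt (iteratedDeriv n (fun s : ℝ => Real.exp (-s ^ 2)))
      (iteratedDeriv (n + 1) (fun s : ℝ => Real.exp (-s ^ 2)) t) t := by
  obtain ⟨p, hp⟩ := iter_gauss n
  have heq : iteratedDeriv n (fun s : ℝ => Real.exp (-s ^ 2))
      = fun t : ℝ => p.eval t * Real.exp (-t ^ 2) := funext hp
  rw [iteratedDeriv_succ, heq]
  exact (hasDerivAt_poly_gauss p t).differentiableAt.hasDerivAt

lemma key (a : ℂ) (n : ℕ) :
    ∫ t : ℝ, Complex.exp (2 * a * t - a ^ 2) *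
        ((iteratedDeriv n (fun s : ℝ => Real.exp (-s ^ 2)) t : ℝ) : ℂ)
      = (-2 * a) ^ n * (Real.pi : ℂ) ^ (1 / 2 : ℂ) := by
  induction n with
  | zero =>
    simp only [iteratedDeriv_zero, pow_zero, one_mul]
    have h : ∀ t : ℝ, Complex.exp (2 * a * t - a ^ 2) * ((Real.exp (-t ^ 2) : ℝ) : ℂ)
        = Complex.exp (-1 * (t : ℂ) ^ 2 + (2 * a) * t + -a ^ 2) := by
      intro t
      rw [Complex.ofReal_exp, ← Complex.exp_add]
      congr 1
      push_cast
      ring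
    simp_rw [h]
    rw [integral_cexp_quadratic (by norm_num) (2 * a) (-a ^ 2)]
    have h0 : -a ^ 2 - (2 * a) ^ 2 / (4 * (-1 : ℂ)) = 0 := by ring
    rw [h0, Complex.exp_zero, mul_one]
    norm_num
  | succ n ih =>
    obtain ⟨p, hp⟩ := iter_gauss n
    obtain ⟨q, hq⟩ := iter_gauss (n + 1)
    set f : ℝ → ℝ := fun s => Real.exp (-s ^ 2) with hf
    set u : ℝ → ℂ := fun t => Complex.exp (2 * a * t - a ^ 2) with hu_def
    set u' : ℝ → ℂ := fun t => 2 * a * Complex.exp (2 * a * t - a ^ 2) with hu'_def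
    set v : ℝ → ℂ := fun t => ((iteratedDeriv n f t : ℝ) : ℂ) with hv_def
    set v' : ℝ → ℂ := fun t => ((iteratedDeriv (n + 1) f t : ℝ) : ℂ) with hv'_def
    have hu : ∀ t : ℝ, HasDerivAt u (u' t) t := by
      intro t
      have h1 : HasDerivAt (fun t : ℝ => 2 * a * (t : ℂ) - a ^ 2) (2 * a) t := by
        have h0 : HasDerivAt (fun t : ℝ => (t : ℂ)) 1 t := by
          exact Complex.ofRealCLM.hasDerivAt (x := t)
        simpa using (h0.const_mul (2 * a)).sub_const (a ^ 2)
      have := h1.cexp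
      rw [hu_def, hu'_def]
      convert this using 1
      ring
    have hv : ∀ t : ℝ, HasDerivAt v (v' t) t := fun t => (hasDerivAt_iter n t).ofReal_comp
    have h1 : Integrable (fun t : ℝ => u t * v' t) := by
      refine (integ_cx q (2 * a) (-a ^ 2)).congr (Filter.Eventually.of_forall fun t => ?_)
      rw [hu_def, hv'_def]
      simp only
      rw [hq t, sub_eq_add_neg]
    have h2 : Integrable (fun t : ℝ => u' t * v t) := by
      refine ((integ_cx p (2 * a) (-a ^ 2)).const_mul (2 * a)).congr
        (Filter.Eventually.of_forall fun t => ?_)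
      rw [hu'_def, hv_def]
      simp only
      rw [hp t, sub_eq_add_neg]
      ring
    have h3 : Integrable (fun t : ℝ => u t * v t) := by
      refine (integ_cx p (2 * a) (-a ^ 2)).congr (Filter.Eventually.of_forall fun t => ?_)
      rw [hu_def, hv_def]
      simp only
      rw [hp t, sub_eq_add_neg]
    have hibp : ∫ t : ℝ, u t * v' t = - ∫ t : ℝ, u' t * v t :=
      MeasureTheory.integral_mul_deriv_eq_deriv_mul_of_integrable (fun t _ => hu t) (fun t _ => hv t) h1 h2 h3
    have hgoal : ∫ t : ℝ, Complex.exp (2 * a * t - a ^ 2) *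
        ((iteratedDeriv (n + 1) f t : ℝ) : ℂ) = ∫ t : ℝ, u t * v' t := rfl
    rw [hgoal, hibp]
    have h4 : ∫ t : ℝ, u' t * v t = 2 * a * ∫ t : ℝ, u t * v t := by
      rw [← MeasureTheory.integral_const_mul]
      congr 1
      funext t
      rw [hu'_def, hu_def, hv_def]
      simp only
      ring
    rw [h4]
    have h5 : ∫ t : ℝ, u t * v t = (-2 * a) ^ n * (Real.pi : ℂ) ^ (1 / 2 : ℂ) := ih
    rw [h5]
    ring

/-- the Segal–Bargmann transform of the `n`-th Hermite function:
`(ν/π)^{3/4} ∫_ℝ exp(−(ν/2)z² + √2 ν xz) H_n(√ν x) e^{−νx²} dx = (ν/π)^{1/4} (2ν)^{n/2} zⁿ`. -/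
theorem stmt10 (ν : ℝ) (hν : 0 < ν) (n : ℕ) (z : ℂ) :
    (((ν / Real.pi) ^ ((3 : ℝ) / 4) : ℝ) : ℂ) *
      ∫ x : ℝ, Complex.exp (-((ν : ℂ) / 2) * z ^ 2 + Real.sqrt 2 * (ν : ℂ) * (x : ℂ) * z) *
        ((hermiteP n (Real.sqrt ν * x) : ℝ) : ℂ) * ((Real.exp (-ν * x ^ 2) : ℝ) : ℂ)
    = (((ν / Real.pi) ^ ((1 : ℝ) / 4) * (2 * ν) ^ ((n : ℝ) / 2) : ℝ) : ℂ) * z ^ n := by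
  have hπ := Real.pi_pos
  have h2ν : (0 : ℝ) < 2 * ν := by linarith
  have hsν : (0 : ℝ) < Real.sqrt ν := Real.sqrt_pos.mpr hν
  set f : ℝ → ℝ := fun s => Real.exp (-s ^ 2) with hf
  set a : ℂ := ((Real.sqrt (2 * ν) : ℝ) : ℂ) * z / 2 with ha
  set F : ℝ → ℂ := fun t =>
    ((-1 : ℂ)) ^ n * (Complex.exp (2 * a * t - a ^ 2) * ((iteratedDeriv n f t : ℝ) : ℂ)) with hF
  have e1 : ((Real.sqrt (2 * ν) : ℝ) : ℂ) * ((Real.sqrt ν : ℝ) : ℂ)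
      = ((Real.sqrt 2 : ℝ) : ℂ) * (ν : ℂ) := by
    rw [← Complex.ofReal_mul, ← Complex.ofReal_mul]
    congr 1
    rw [Real.sqrt_mul (by norm_num) ν, mul_assoc, Real.mul_self_sqrt hν.le]
  have e2 : ((Real.sqrt (2 * ν) : ℝ) : ℂ) ^ 2 = 2 * (ν : ℂ) := by
    rw [← Complex.ofReal_pow, Real.sq_sqrt h2ν.le]
    push_cast
    ring
  have hstep : ∀ x : ℝ,
      Complex.exp (-((ν : ℂ) / 2) * z ^ 2 + Real.sqrt 2 * (ν : ℂ) * (x : ℂ) * z) *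
        ((hermiteP n (Real.sqrt ν * x) : ℝ) : ℂ) * ((Real.exp (-ν * x ^ 2) : ℝ) : ℂ)
      = F (Real.sqrt ν * x) := by
    intro x
    have hexp : (-((ν : ℂ) / 2) * z ^ 2 + Real.sqrt 2 * (ν : ℂ) * (x : ℂ) * z)
        = 2 * a * ((Real.sqrt ν * x : ℝ) : ℂ) - a ^ 2 := by
      rw [ha]
      push_cast
      linear_combination (-(x : ℂ) * z) * e1 + (z ^ 2 / 4) * e2
    have hherm : (hermiteP n (Real.sqrt ν * x)) * (Real.exp (-ν * x ^ 2))
        = (-1 : ℝ) ^ n * iteratedDeriv n f (Real.sqrt ν * x) := by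
      unfold hermiteP
      have ht2 : (Real.sqrt ν * x) ^ 2 = ν * x ^ 2 := by
        rw [mul_pow, Real.sq_sqrt hν.le]
      have : Real.exp ((Real.sqrt ν * x) ^ 2) * Real.exp (-ν * x ^ 2) = 1 := by
        rw [← Real.exp_add, ht2]
        simp
      calc (-1 : ℝ) ^ n * Real.exp ((Real.sqrt ν * x) ^ 2) *
            iteratedDeriv n f (Real.sqrt ν * x) * Real.exp (-ν * x ^ 2)
          = (-1 : ℝ) ^ n * iteratedDeriv n f (Real.sqrt ν * x) *
            (Real.exp ((Real.sqrt ν * x) ^ 2) * Real.exp (-ν * x ^ 2)) := by ring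
        _ = (-1 : ℝ) ^ n * iteratedDeriv n f (Real.sqrt ν * x) := by rw [this, mul_one]
    rw [hF]
    simp only
    rw [hexp, mul_assoc, ← Complex.ofReal_mul, hherm]
    push_cast
    ring
  rw [show (∫ x : ℝ, Complex.exp (-((ν : ℂ) / 2) * z ^ 2 +
        Real.sqrt 2 * (ν : ℂ) * (x : ℂ) * z) *
        ((hermiteP n (Real.sqrt ν * x) : ℝ) : ℂ) * ((Real.exp (-ν * x ^ 2) : ℝ) : ℂ))
      = ∫ x : ℝ, F (Real.sqrt ν * x) from by congr 1; funext x; exact hstep x]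
  rw [MeasureTheory.Measure.integral_comp_mul_left F (Real.sqrt ν)]
  have hFint : ∫ t : ℝ, F t = ((-1 : ℂ)) ^ n * ((-2 * a) ^ n * (Real.pi : ℂ) ^ (1 / 2 : ℂ)) := by
    rw [hF]
    rw [MeasureTheory.integral_const_mul]
    rw [key a n]
  rw [hFint]
  have habs : |(Real.sqrt ν)⁻¹| = (Real.sqrt ν)⁻¹ := abs_of_pos (by positivity)
  rw [habs]
  have hsgn : ((-1 : ℂ)) ^ n * ((-2 * a) ^ n * (Real.pi : ℂ) ^ (1 / 2 : ℂ))
      = (((Real.sqrt (2 * ν) ^ n : ℝ)) : ℂ) * z ^ n * (Real.pi : ℂ) ^ (1 / 2 : ℂ) := by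
    rw [← mul_assoc, ← mul_pow]
    have : (-1 : ℂ) * (-2 * a) = ((Real.sqrt (2 * ν) : ℝ) : ℂ) * z := by
      rw [ha]; ring
    rw [this, mul_pow]
    push_cast
    ring
  rw [hsgn]
  have hpi : (Real.pi : ℂ) ^ (1 / 2 : ℂ) = ((Real.pi ^ ((1 : ℝ) / 2) : ℝ) : ℂ) := by
    rw [Complex.ofReal_cpow hπ.le]
    norm_num
  rw [hpi]
  have hreal : (ν / Real.pi) ^ ((3 : ℝ) / 4) *
      ((Real.sqrt ν)⁻¹ * (Real.sqrt (2 * ν) ^ n * Real.pi ^ ((1 : ℝ) / 2)))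
      = (ν / Real.pi) ^ ((1 : ℝ) / 4) * (2 * ν) ^ ((n : ℝ) / 2) := by
    have e3 : Real.sqrt (2 * ν) ^ n = (2 * ν) ^ ((n : ℝ) / 2) := by
      rw [Real.sqrt_eq_rpow, ← Real.rpow_natCast ((2 * ν) ^ ((1 : ℝ) / 2)) n,
        ← Real.rpow_mul h2ν.le]
      congr 1
      ring
    have e4 : (ν / Real.pi) ^ ((3 : ℝ) / 4)
        = (ν / Real.pi) ^ ((1 : ℝ) / 4) * (ν / Real.pi) ^ ((1 : ℝ) / 2) := by
      rw [← Real.rpow_add (div_pos hν hπ)]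
      norm_num
    have e5 : (ν / Real.pi) ^ ((1 : ℝ) / 2) = ν ^ ((1 : ℝ) / 2) / Real.pi ^ ((1 : ℝ) / 2) :=
      Real.div_rpow hν.le hπ.le _
    rw [e3, e4, e5, Real.sqrt_eq_rpow]
    have hν2 : ν ^ ((1 : ℝ) / 2) ≠ 0 := (Real.rpow_pos_of_pos hν _).ne'
    have hπ2 : Real.pi ^ ((1 : ℝ) / 2) ≠ 0 := (Real.rpow_pos_of_pos hπ _).ne'
    field_simp
  calc (((ν / Real.pi) ^ ((3 : ℝ) / 4) : ℝ) : ℂ) *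
      ((Real.sqrt ν)⁻¹ • ((((Real.sqrt (2 * ν) ^ n : ℝ)) : ℂ) * z ^ n *
        ((Real.pi ^ ((1 : ℝ) / 2) : ℝ) : ℂ)))
      = (((ν / Real.pi) ^ ((3 : ℝ) / 4) *
          ((Real.sqrt ν)⁻¹ * (Real.sqrt (2 * ν) ^ n * Real.pi ^ ((1 : ℝ) / 2))) : ℝ) : ℂ) *
        z ^ n := by
        rw [real_smul]
        push_cast
        ring
    _ = (((ν / Real.pi) ^ ((1 : ℝ) / 4) * (2 * ν) ^ ((n : ℝ) / 2) : ℝ) : ℂ) * z ^ n := by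
        rw [hreal]
end

section
/- Let Γ ⊂ ℝ^d be a discrete subgroup viewed inside ℂ^d = ℝ^d + iℝ^d, ν > 0, and χ a unit-circle-valued character on Γ. Suppose φ : ℝ^d → ℂ is measurable, satisfies φ(x+γ) = χ(γ) exp(ν⟨x+γ/2,γ⟩) φ(x), and the integral Bφ(z) = (ν/π)^{3d/4} ∫_{ℝ^d} exp(√2 ν ⟨z,x⟩ − (ν/2)⟨z,z⟩) φ(x) e^{−ν‖x‖²} dx converges absolutely for all z ∈ ℂ^d. Then for every γ ∈ Γ and z ∈ ℂ^d, Bφ(z + γ/√2) = χ(γ) exp(ν H(z + γ/(2√2), γ/√2)) Bφ(z), where H(z,w) = ⟨z, conj(w)⟩ is the standard Hermitian product on ℂ^d. -/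
open MeasureTheory

/-- the Segal–Bargmann transform of a likewise-theta function satisfies the
functional equation of `(Γ/√2, χ~)`-holomorphic theta functions:
`Bφ(z + γ/√2) = χ(γ) exp(ν H(z + γ/(2√2), γ/√2)) Bφ(z)` where `H(z,w) = ⟨z, conj w⟩`. -/
theorem stmt11 (d : ℕ) (ν : ℝ) (hν : 0 < ν)
    (Γ : AddSubgroup (Fin d → ℝ)) (hdisc : DiscreteTopology Γ)
    (χ : Γ → ℂ) (hχ1 : ∀ γ, ‖χ γ‖ = 1)
    (hχ : ∀ γ γ', χ (γ + γ') = χ γ * χ γ')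
    (φ : (Fin d → ℝ) → ℂ) (hmeas : Measurable φ)
    (hφe : ∀ (x : Fin d → ℝ) (γ : Γ),
      φ (x + (γ : Fin d → ℝ)) =
        χ γ * Complex.exp ((ν * ∑ i, (x i + (γ : Fin d → ℝ) i / 2) * (γ : Fin d → ℝ) i : ℝ))
          * φ x)
    (hint : ∀ z : Fin d → ℂ, Integrable (fun x : Fin d → ℝ =>
      Complex.exp (Real.sqrt 2 * (ν : ℂ) * (∑ i, z i * (x i : ℂ)) -
          ((ν : ℂ) / 2) * ∑ i, z i * z i) * φ x *
        ((Real.exp (-ν * ∑ i, x i * x i) : ℝ) : ℂ))) :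
    ∀ (γ : Γ) (z : Fin d → ℂ),
      (fun w : Fin d → ℂ => (((ν / Real.pi) ^ ((3 : ℝ) * d / 4) : ℝ) : ℂ) *
        ∫ x : Fin d → ℝ,
          Complex.exp (Real.sqrt 2 * (ν : ℂ) * (∑ i, w i * (x i : ℂ)) -
              ((ν : ℂ) / 2) * ∑ i, w i * w i) * φ x *
            ((Real.exp (-ν * ∑ i, x i * x i) : ℝ) : ℂ))
        (z + fun i => (((γ : Fin d → ℝ) i / Real.sqrt 2 : ℝ) : ℂ))
      = χ γ *
        Complex.exp ((ν : ℂ) * ∑ i,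
          (z i + (((γ : Fin d → ℝ) i / (2 * Real.sqrt 2) : ℝ) : ℂ)) *
            (starRingEnd ℂ) (((((γ : Fin d → ℝ) i / Real.sqrt 2 : ℝ)) : ℂ))) *
        (fun w : Fin d → ℂ => (((ν / Real.pi) ^ ((3 : ℝ) * d / 4) : ℝ) : ℂ) *
          ∫ x : Fin d → ℝ,
            Complex.exp (Real.sqrt 2 * (ν : ℂ) * (∑ i, w i * (x i : ℂ)) -
                ((ν : ℂ) / 2) * ∑ i, w i * w i) * φ x *
              ((Real.exp (-ν * ∑ i, x i * x i) : ℝ) : ℂ)) z := by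
  intro γ z
  have s2 : (Real.sqrt 2 : ℂ) * Real.sqrt 2 = 2 := by
    norm_cast
    exact Real.mul_self_sqrt (by norm_num)
  set g : Fin d → ℝ := (γ : Fin d → ℝ) with hg
  set C : ℂ := χ γ * Complex.exp ((ν : ℂ) * ∑ i,
      (z i + ((g i / (2 * Real.sqrt 2) : ℝ) : ℂ)) *
        (starRingEnd ℂ) ((g i / Real.sqrt 2 : ℝ) : ℂ)) with hC
  simp only
  have key : ∀ x : Fin d → ℝ,
      Complex.exp (Real.sqrt 2 * (ν : ℂ) *
            (∑ i, (z i + ((g i / Real.sqrt 2 : ℝ) : ℂ)) * (((x + g) i : ℝ) : ℂ)) -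
          ((ν : ℂ) / 2) * ∑ i, (z i + ((g i / Real.sqrt 2 : ℝ) : ℂ)) *
            (z i + ((g i / Real.sqrt 2 : ℝ) : ℂ))) * φ (x + g) *
        ((Real.exp (-ν * ∑ i, (x + g) i * (x + g) i) : ℝ) : ℂ)
      = C * (Complex.exp (Real.sqrt 2 * (ν : ℂ) * (∑ i, z i * (x i : ℂ)) -
            ((ν : ℂ) / 2) * ∑ i, z i * z i) * φ x *
          ((Real.exp (-ν * ∑ i, x i * x i) : ℝ) : ℂ)) := by
    intro x
    rw [hφe x γ, hC]
    simp only [Pi.add_apply, Complex.ofReal_exp, Complex.conj_ofReal, ← hg]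
    rw [show ∀ a b c e : ℂ, Complex.exp a * (χ γ * Complex.exp b * c) * Complex.exp e
        = χ γ * c * Complex.exp (a + b + e) from by
      intro a b c e; rw [Complex.exp_add, Complex.exp_add]; ring]
    rw [show ∀ a b c e : ℂ, χ γ * Complex.exp a * (Complex.exp b * c * Complex.exp e)
        = χ γ * c * Complex.exp (a + b + e) from by
      intro a b c e; rw [Complex.exp_add, Complex.exp_add]; ring]
    congr 1
    push_cast
    simp only [Finset.mul_sum, ← Finset.sum_sub_distrib, ← Finset.sum_add_distrib,
      neg_mul, ← Finset.sum_neg_distrib]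
    refine congrArg Complex.exp (Finset.sum_congr rfl fun i _ => ?_)
    have hs0 : (Real.sqrt 2 : ℂ) ≠ 0 :=
      Complex.ofReal_ne_zero.mpr (by positivity)
    have hdiv : ((g i : ℂ) / Real.sqrt 2) = (g i : ℂ) * Real.sqrt 2 / 2 := by
      rw [div_eq_div_iff hs0 (by norm_num : (2:ℂ) ≠ 0)]
      linear_combination (-(g i : ℂ)) * s2
    have hdiv2 : ((g i : ℂ) / (2 * Real.sqrt 2)) = (g i : ℂ) * Real.sqrt 2 / 4 := by
      rw [div_eq_div_iff (by simp [hs0]) (by norm_num : (4:ℂ) ≠ 0)]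
      linear_combination (-2 * (g i : ℂ)) * s2
    rw [hdiv, hdiv2]
    linear_combination ((ν : ℂ) * g i * x i / 2 + (ν : ℂ) * (g i)^2 / 4) * s2
  simp only [Pi.add_apply]
  rw [← MeasureTheory.integral_add_right_eq_self (μ := volume)
    (fun x : Fin d → ℝ => Complex.exp (Real.sqrt 2 * (ν : ℂ) *
          (∑ i, (z i + ((g i / Real.sqrt 2 : ℝ) : ℂ)) * ((x i : ℝ) : ℂ)) -
        ((ν : ℂ) / 2) * ∑ i, (z i + ((g i / Real.sqrt 2 : ℝ) : ℂ)) *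
          (z i + ((g i / Real.sqrt 2 : ℝ) : ℂ))) * φ x *
      ((Real.exp (-ν * ∑ i, x i * x i) : ℝ) : ℂ)) g]
  simp only [Pi.add_apply] at key ⊢
  simp_rw [key]
  rw [MeasureTheory.integral_const_mul]
  ring
end
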